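/- Let A be an associative unital algebra over a commutative ring containing the rationals, and let D₁,…,D_n, E¹,…,Eⁿ: A → A be derivations which pairwise commute (all D's and E's commute with each other as maps). Then the product a ⋆ b := μ ∘ e^{λ Σ_i D_i ⊗ E^i}(a ⊗ b) = Σ_{r≥0} (λ^r / r!) Σ_{i₁,…,i_r} μ(D_{i₁}⋯D_{i_r} a ⊗ E^{i₁}⋯E^{i_r} b), where μ denotes the undeformed multiplication, is an associative unital product on A[[λ]] deforming the product of A, i.e. a ⋆ b = ab + O(λ). -/

import Mathlib

noncomputable section

/-- Composition of a list of operators. -/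
def comps {A : Type*} (l : List (A → A)) : A → A :=
  l.foldr (· ∘ ·) id

/-- Gerstenhaber's associative deformation by commuting derivations:
`a ⋆ b = μ ∘ e^{λ Σ_i D_i ⊗ E^i} (a ⊗ b)`, extended `λ`-bilinearly to `A[[λ]]`,
i.e. the `λ^n`-coefficient of `f ⋆ g` is
`Σ_{r+p+q=n} (1/r!) Σ_{i₁,…,i_r} (D_{i₁}⋯D_{i_r} f_p) · (E^{i₁}⋯E^{i_r} g_q)`. -/
def starCD (K : Type*) [CommRing K] [Algebra ℚ K] (A : Type*) [Ring A] [Algebra K A]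
    (N : ℕ) (D E : Fin N → A → A) (f g : PowerSeries A) : PowerSeries A :=
  PowerSeries.mk fun n =>
    ∑ rm ∈ Finset.HasAntidiagonal.antidiagonal n, ∑ pq ∈ Finset.HasAntidiagonal.antidiagonal rm.2,
      algebraMap ℚ K (1 / rm.1.factorial) •
        ∑ v : Fin rm.1 → Fin N,
          comps ((List.ofFn v).map D) (PowerSeries.coeff pq.1 f) *
            comps ((List.ofFn v).map E) (PowerSeries.coeff pq.2 g)

namespace CDaux

set_option linter.unusedSectionVars false

variable {A : Type*} [Ring A]

@[simp] lemma comps_nil : comps ([] : List (A → A)) = id := rfl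

lemma comps_cons (φ : A → A) (l : List (A → A)) : comps (φ :: l) = φ ∘ comps l := rfl

lemma comps_append (l₁ l₂ : List (A → A)) : comps (l₁ ++ l₂) = comps l₁ ∘ comps l₂ := by
  induction l₁ with
  | nil => rfl
  | cons x l ih => simp only [List.cons_append, comps_cons, ih]; rfl

lemma comps_add (l : List (A → A)) (h : ∀ φ ∈ l, ∀ a b : A, φ (a + b) = φ a + φ b)
    (a b : A) : comps l (a + b) = comps l a + comps l b := by
  induction l with
  | nil => rfl
  | cons x l ih =>
    simp only [comps_cons, Function.comp_apply]
    rw [ih (fun φ hφ => h φ (List.mem_cons_of_mem _ hφ)), h x (List.mem_cons_self)]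

lemma comps_zero (l : List (A → A)) (h : ∀ φ ∈ l, ∀ a b : A, φ (a + b) = φ a + φ b) :
    comps l 0 = 0 := by
  have := comps_add l h 0 0
  simpa using this.symm

lemma comps_sum (l : List (A → A)) (h : ∀ φ ∈ l, ∀ a b : A, φ (a + b) = φ a + φ b)
    {ι : Type*} (s : Finset ι) (f : ι → A) :
    comps l (∑ x ∈ s, f x) = ∑ x ∈ s, comps l (f x) :=
  map_sum (AddMonoidHom.mk' (comps l) (comps_add l h)) f s

lemma comps_smul {K : Type*} [CommRing K] [Algebra K A] (l : List (A → A))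
    (h : ∀ φ ∈ l, ∀ (c : K) (a : A), φ (c • a) = c • φ a) (c : K) (a : A) :
    comps l (c • a) = c • comps l a := by
  induction l with
  | nil => rfl
  | cons x l ih =>
    simp only [comps_cons, Function.comp_apply]
    rw [ih (fun φ hφ => h φ (List.mem_cons_of_mem _ hφ)), h x (List.mem_cons_self)]

lemma comps_comm (φ : A → A) (l : List (A → A))
    (h : ∀ ψ ∈ l, ∀ a : A, φ (ψ a) = ψ (φ a)) (a : A) :
    φ (comps l a) = comps l (φ a) := by
  induction l with
  | nil => rfl
  | cons x l ih =>
    simp only [comps_cons, Function.comp_apply]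
    rw [h x (List.mem_cons_self), ih (fun ψ hψ => h ψ (List.mem_cons_of_mem _ hψ))]

lemma comps_comps_comm (l₁ l₂ : List (A → A))
    (h : ∀ φ ∈ l₁, ∀ ψ ∈ l₂, ∀ a : A, φ (ψ a) = ψ (φ a)) (a : A) :
    comps l₁ (comps l₂ a) = comps l₂ (comps l₁ a) := by
  induction l₁ generalizing a with
  | nil => rfl
  | cons x l ih =>
    simp only [comps_cons, Function.comp_apply]
    rw [ih (fun φ hφ => h φ (List.mem_cons_of_mem _ hφ)),
      comps_comm x l₂ (h x (List.mem_cons_self)) (comps l a)]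

lemma comps_one_of_ne_nil {β : Type*} (F : β → A → A)
    (h1 : ∀ i, F i 1 = 0) (h0 : ∀ i, F i 0 = 0) :
    ∀ l : List β, l ≠ [] → comps (l.map F) (1 : A) = 0 := by
  intro l
  induction l with
  | nil => intro h; exact absurd rfl h
  | cons x l ih =>
    intro _
    rcases l with - | ⟨y, l⟩
    · simpa [comps] using h1 x
    · simp only [List.map_cons, comps_cons, Function.comp_apply] at ih ⊢
      rw [ih (by simp), h0]

lemma sum_fn_succ {M : Type*} [AddCommMonoid M] {N s : ℕ} (f : (Fin (s+1) → Fin N) → M) :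
    ∑ v : Fin (s+1) → Fin N, f v
      = ∑ i : Fin N, ∑ v : Fin s → Fin N, f (Fin.snoc v i) := by
  rw [← Equiv.sum_comp (Fin.snocEquiv (fun _ => Fin N)) f, Fintype.sum_prod_type]
  rfl

lemma ofFn_snoc {α : Type*} {s : ℕ} (v : Fin s → α) (i : α) :
    List.ofFn (Fin.snoc v i : Fin (s+1) → α) = List.ofFn v ++ [i] := by
  rw [List.ofFn_succ']
  simp [List.concat_eq_append]

lemma comps_map_snoc {β : Type*} (F : β → A → A) {s : ℕ} (v : Fin s → β) (i : β) (a : A) :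
    comps ((List.ofFn (Fin.snoc v i : Fin (s+1) → β)).map F) a
      = comps ((List.ofFn v).map F) (F i a) := by
  rw [ofFn_snoc, List.map_append, comps_append]
  rfl

lemma mem_map_comm {β : Type*} (F : β → A → A) (G : A → A)
    (h : ∀ i a, G (F i a) = F i (G a)) (l : List β) :
    ∀ ψ ∈ l.map F, ∀ a : A, G (ψ a) = ψ (G a) := by
  intro ψ hψ a
  obtain ⟨i, -, rfl⟩ := List.mem_map.1 hψ
  exact h i a

lemma mem_map_add {β : Type*} (F : β → A → A)
    (h : ∀ i (a b : A), F i (a + b) = F i a + F i b) (l : List β) :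
    ∀ ψ ∈ l.map F, ∀ a b : A, ψ (a + b) = ψ a + ψ b := by
  intro ψ hψ a b
  obtain ⟨i, -, rfl⟩ := List.mem_map.1 hψ
  exact h i a b

lemma mem_map_smul {K : Type*} [CommRing K] [Algebra K A] {β : Type*} (F : β → A → A)
    (h : ∀ i (c : K) (a : A), F i (c • a) = c • F i a) (l : List β) :
    ∀ ψ ∈ l.map F, ∀ (c : K) (a : A), ψ (c • a) = c • ψ a := by
  intro ψ hψ c a
  obtain ⟨i, -, rfl⟩ := List.mem_map.1 hψ
  exact h i c a

/-- Pascal-style recombination of an antidiagonal sum. -/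
lemma pascal_sum {M : Type*} [AddCommMonoid M] (s : ℕ) (g : ℕ → ℕ → M) :
    ∑ jk ∈ Finset.HasAntidiagonal.antidiagonal s,
        (s.choose jk.1 • g (jk.1 + 1) jk.2 + s.choose jk.1 • g jk.1 (jk.2 + 1))
      = ∑ jk ∈ Finset.HasAntidiagonal.antidiagonal (s + 1), (s + 1).choose jk.1 • g jk.1 jk.2 := by
  rw [Finset.sum_add_distrib]
  have h1 : ∑ jk ∈ Finset.HasAntidiagonal.antidiagonal s, s.choose jk.1 • g (jk.1 + 1) jk.2
      = ∑ jk ∈ Finset.HasAntidiagonal.antidiagonal (s + 1),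
          (if jk.1 = 0 then 0 else s.choose (jk.1 - 1)) • g jk.1 jk.2 := by
    rw [Finset.Nat.sum_antidiagonal_succ]
    simp
  have h2 : ∑ jk ∈ Finset.HasAntidiagonal.antidiagonal s, s.choose jk.1 • g jk.1 (jk.2 + 1)
      = ∑ jk ∈ Finset.HasAntidiagonal.antidiagonal (s + 1), s.choose jk.1 • g jk.1 jk.2 := by
    rw [Finset.Nat.sum_antidiagonal_succ']
    simp [Nat.choose_succ_self]
  rw [h1, h2, ← Finset.sum_add_distrib]
  refine Finset.sum_congr rfl fun jk _ => ?_
  rw [← add_nsmul]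
  congr 1
  rcases jk with ⟨j, k⟩
  cases j with
  | zero => simp
  | succ j' => simp [Nat.choose_succ_succ, Nat.add_comm]

variable {N : ℕ}

/-- `Σ_{u,v} (D_u a)(D_v b) E_u E_v c`. -/
def GG (D E : Fin N → A → A) (j k : ℕ) (a b c : A) : A :=
  ∑ u : Fin j → Fin N, ∑ v : Fin k → Fin N,
    comps ((List.ofFn u).map D) a * comps ((List.ofFn v).map D) b *
      comps ((List.ofFn u).map E) (comps ((List.ofFn v).map E) c)

/-- `Σ_{u,v} (D_u D_v a)(E_u b)(E_v c)`. -/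
def HH (D E : Fin N → A → A) (j k : ℕ) (a b c : A) : A :=
  ∑ u : Fin j → Fin N, ∑ v : Fin k → Fin N,
    comps ((List.ofFn u).map D) (comps ((List.ofFn v).map D) a) *
      comps ((List.ofFn u).map E) b * comps ((List.ofFn v).map E) c

lemma GG_succ_left (D E : Fin N → A → A)
    (hEE : ∀ i j (a : A), E i (E j a) = E j (E i a)) (j k : ℕ) (a b c : A) :
    ∑ i : Fin N, GG D E j k (D i a) b (E i c) = GG D E (j + 1) k a b c := by
  unfold GG
  rw [sum_fn_succ]
  refine Finset.sum_congr rfl fun i _ => ?_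
  refine Finset.sum_congr rfl fun u _ => Finset.sum_congr rfl fun v _ => ?_
  rw [comps_map_snoc, comps_map_snoc,
    comps_comm (E i) ((List.ofFn v).map E) (mem_map_comm E (E i) (fun j a => hEE i j a) _) c]

lemma GG_succ_right (D E : Fin N → A → A) (j k : ℕ) (a b c : A) :
    ∑ i : Fin N, GG D E j k a (D i b) (E i c) = GG D E j (k + 1) a b c := by
  unfold GG
  have key : ∀ u : Fin j → Fin N,
      (∑ v : Fin (k+1) → Fin N,
        comps ((List.ofFn u).map D) a * comps ((List.ofFn v).map D) b *
          comps ((List.ofFn u).map E) (comps ((List.ofFn v).map E) c))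
      = ∑ i : Fin N, ∑ v : Fin k → Fin N,
          comps ((List.ofFn u).map D) a * comps ((List.ofFn v).map D) (D i b) *
            comps ((List.ofFn u).map E) (comps ((List.ofFn v).map E) (E i c)) := by
    intro u
    rw [sum_fn_succ]
    exact Finset.sum_congr rfl fun i _ => Finset.sum_congr rfl fun v _ => by
      rw [comps_map_snoc, comps_map_snoc]
  rw [Finset.sum_congr rfl fun u _ => key u, Finset.sum_comm]

lemma HH_succ_left (D E : Fin N → A → A)
    (hDD : ∀ i j (a : A), D i (D j a) = D j (D i a)) (j k : ℕ) (a b c : A) :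
    ∑ i : Fin N, HH D E j k (D i a) (E i b) c = HH D E (j + 1) k a b c := by
  unfold HH
  rw [sum_fn_succ]
  refine Finset.sum_congr rfl fun i _ => ?_
  refine Finset.sum_congr rfl fun u _ => Finset.sum_congr rfl fun v _ => ?_
  rw [comps_map_snoc, comps_map_snoc,
    comps_comm (D i) ((List.ofFn v).map D) (mem_map_comm D (D i) (fun j a => hDD i j a) _) a]

lemma HH_succ_right (D E : Fin N → A → A) (j k : ℕ) (a b c : A) :
    ∑ i : Fin N, HH D E j k (D i a) b (E i c) = HH D E j (k + 1) a b c := by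
  unfold HH
  have key : ∀ u : Fin j → Fin N,
      (∑ v : Fin (k+1) → Fin N,
        comps ((List.ofFn u).map D) (comps ((List.ofFn v).map D) a) *
          comps ((List.ofFn u).map E) b * comps ((List.ofFn v).map E) c)
      = ∑ i : Fin N, ∑ v : Fin k → Fin N,
          comps ((List.ofFn u).map D) (comps ((List.ofFn v).map D) (D i a)) *
            comps ((List.ofFn u).map E) b * comps ((List.ofFn v).map E) (E i c) := by
    intro u
    rw [sum_fn_succ]
    exact Finset.sum_congr rfl fun i _ => Finset.sum_congr rfl fun v _ => by
      rw [comps_map_snoc, comps_map_snoc]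
  rw [Finset.sum_congr rfl fun u _ => key u, Finset.sum_comm]

/-- iterated Leibniz rule in the first slot -/
lemma TD_mul (D E : Fin N → A → A)
    (hD_add : ∀ i (a b : A), D i (a + b) = D i a + D i b)
    (hD_leibniz : ∀ i (a b : A), D i (a * b) = D i a * b + a * D i b)
    (hEE : ∀ i j (a : A), E i (E j a) = E j (E i a)) :
    ∀ (s : ℕ) (a b c : A),
    (∑ v : Fin s → Fin N,
        comps ((List.ofFn v).map D) (a * b) * comps ((List.ofFn v).map E) c)
      = ∑ jk ∈ Finset.HasAntidiagonal.antidiagonal s, s.choose jk.1 • GG D E jk.1 jk.2 a b c := by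
  intro s
  induction s with
  | zero => intro a b c; simp [GG]
  | succ s ih =>
    intro a b c
    rw [sum_fn_succ]
    have step : ∀ i : Fin N,
        (∑ v : Fin s → Fin N,
          comps ((List.ofFn (Fin.snoc v i : Fin (s+1) → Fin N)).map D) (a * b) *
            comps ((List.ofFn (Fin.snoc v i : Fin (s+1) → Fin N)).map E) c)
        = (∑ jk ∈ Finset.HasAntidiagonal.antidiagonal s,
              s.choose jk.1 • GG D E jk.1 jk.2 (D i a) b (E i c))
          + ∑ jk ∈ Finset.HasAntidiagonal.antidiagonal s,
              s.choose jk.1 • GG D E jk.1 jk.2 a (D i b) (E i c) := by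
      intro i
      rw [← ih (D i a) b (E i c), ← ih a (D i b) (E i c), ← Finset.sum_add_distrib]
      refine Finset.sum_congr rfl fun v _ => ?_
      rw [comps_map_snoc, comps_map_snoc, hD_leibniz i a b,
        comps_add _ (mem_map_add D hD_add _), add_mul]
    rw [Finset.sum_congr rfl fun i _ => step i, Finset.sum_add_distrib,
      Finset.sum_comm, Finset.sum_comm (s := Finset.univ)]
    have e1 : ∑ jk ∈ Finset.HasAntidiagonal.antidiagonal s, ∑ i : Fin N,
        s.choose jk.1 • GG D E jk.1 jk.2 (D i a) b (E i c)
        = ∑ jk ∈ Finset.HasAntidiagonal.antidiagonal s,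
            s.choose jk.1 • GG D E (jk.1 + 1) jk.2 a b c :=
      Finset.sum_congr rfl fun jk _ => by
        rw [← Finset.smul_sum, GG_succ_left D E hEE]
    have e2 : ∑ jk ∈ Finset.HasAntidiagonal.antidiagonal s, ∑ i : Fin N,
        s.choose jk.1 • GG D E jk.1 jk.2 a (D i b) (E i c)
        = ∑ jk ∈ Finset.HasAntidiagonal.antidiagonal s,
            s.choose jk.1 • GG D E jk.1 (jk.2 + 1) a b c :=
      Finset.sum_congr rfl fun jk _ => by
        rw [← Finset.smul_sum, GG_succ_right D E]
    rw [e1, e2, ← Finset.sum_add_distrib]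
    exact pascal_sum s (fun j k => GG D E j k a b c)

/-- iterated Leibniz rule in the second slot -/
lemma TE_mul (D E : Fin N → A → A)
    (hE_add : ∀ i (a b : A), E i (a + b) = E i a + E i b)
    (hE_leibniz : ∀ i (a b : A), E i (a * b) = E i a * b + a * E i b)
    (hDD : ∀ i j (a : A), D i (D j a) = D j (D i a)) :
    ∀ (s : ℕ) (a b c : A),
    (∑ v : Fin s → Fin N,
        comps ((List.ofFn v).map D) a * comps ((List.ofFn v).map E) (b * c))
      = ∑ jk ∈ Finset.HasAntidiagonal.antidiagonal s, s.choose jk.1 • HH D E jk.1 jk.2 a b c := by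
  intro s
  induction s with
  | zero => intro a b c; simp [HH, mul_assoc]
  | succ s ih =>
    intro a b c
    rw [sum_fn_succ]
    have step : ∀ i : Fin N,
        (∑ v : Fin s → Fin N,
          comps ((List.ofFn (Fin.snoc v i : Fin (s+1) → Fin N)).map D) a *
            comps ((List.ofFn (Fin.snoc v i : Fin (s+1) → Fin N)).map E) (b * c))
        = (∑ jk ∈ Finset.HasAntidiagonal.antidiagonal s,
              s.choose jk.1 • HH D E jk.1 jk.2 (D i a) (E i b) c)
          + ∑ jk ∈ Finset.HasAntidiagonal.antidiagonal s,
              s.choose jk.1 • HH D E jk.1 jk.2 (D i a) b (E i c) := by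
      intro i
      rw [← ih (D i a) (E i b) c, ← ih (D i a) b (E i c), ← Finset.sum_add_distrib]
      refine Finset.sum_congr rfl fun v _ => ?_
      rw [comps_map_snoc, comps_map_snoc, hE_leibniz i b c,
        comps_add _ (mem_map_add E hE_add _), mul_add]
    rw [Finset.sum_congr rfl fun i _ => step i, Finset.sum_add_distrib,
      Finset.sum_comm, Finset.sum_comm (s := Finset.univ)]
    have e1 : ∑ jk ∈ Finset.HasAntidiagonal.antidiagonal s, ∑ i : Fin N,
        s.choose jk.1 • HH D E jk.1 jk.2 (D i a) (E i b) c
        = ∑ jk ∈ Finset.HasAntidiagonal.antidiagonal s,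
            s.choose jk.1 • HH D E (jk.1 + 1) jk.2 a b c :=
      Finset.sum_congr rfl fun jk _ => by
        rw [← Finset.smul_sum, HH_succ_left D E hDD]
    have e2 : ∑ jk ∈ Finset.HasAntidiagonal.antidiagonal s, ∑ i : Fin N,
        s.choose jk.1 • HH D E jk.1 jk.2 (D i a) b (E i c)
        = ∑ jk ∈ Finset.HasAntidiagonal.antidiagonal s,
            s.choose jk.1 • HH D E jk.1 (jk.2 + 1) a b c :=
      Finset.sum_congr rfl fun jk _ => by
        rw [← Finset.smul_sum, HH_succ_right D E]
    rw [e1, e2, ← Finset.sum_add_distrib]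
    exact pascal_sum s (fun j k => HH D E j k a b c)

/-- the 6-fold antidiagonal reindexing -/
lemma reindex6 {M : Type*} [AddCommMonoid M] (n : ℕ) (F : ℕ → ℕ → ℕ → ℕ → ℕ → ℕ → M) :
    (∑ sm ∈ Finset.HasAntidiagonal.antidiagonal n, ∑ kt ∈ Finset.HasAntidiagonal.antidiagonal sm.2,
      ∑ rm ∈ Finset.HasAntidiagonal.antidiagonal kt.1, ∑ pq ∈ Finset.HasAntidiagonal.antidiagonal rm.2,
        ∑ jk ∈ Finset.HasAntidiagonal.antidiagonal sm.1, F rm.1 jk.1 jk.2 pq.1 pq.2 kt.2)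
  = ∑ rm ∈ Finset.HasAntidiagonal.antidiagonal n, ∑ pk ∈ Finset.HasAntidiagonal.antidiagonal rm.2,
      ∑ sm' ∈ Finset.HasAntidiagonal.antidiagonal pk.2, ∑ qt ∈ Finset.HasAntidiagonal.antidiagonal sm'.2,
        ∑ jl ∈ Finset.HasAntidiagonal.antidiagonal rm.1, F jl.1 jl.2 sm'.1 pk.1 qt.1 qt.2 := by
  conv_lhs => rw [Finset.sum_sigma', Finset.sum_sigma', Finset.sum_sigma', Finset.sum_sigma']
  conv_rhs => rw [Finset.sum_sigma', Finset.sum_sigma', Finset.sum_sigma', Finset.sum_sigma']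
  refine Finset.sum_nbij'
    (fun x => match x with
      | ⟨⟨⟨⟨⟨s,m⟩,⟨k,t⟩⟩,⟨r,m'⟩⟩,⟨p,q⟩⟩,⟨j,k'⟩⟩ =>
        ⟨⟨⟨⟨(r+j, k'+(p+(q+t))), (p, k'+(q+t))⟩, (k', q+t)⟩, (q,t)⟩, (r,j)⟩)
    (fun y => match y with
      | ⟨⟨⟨⟨⟨r,m⟩,⟨p,k⟩⟩,⟨s,m'⟩⟩,⟨q,t⟩⟩,⟨j,l⟩⟩ =>
        ⟨⟨⟨⟨(l+s, j+(p+(q+t))), (j+(p+q), t)⟩, (j, p+q)⟩, (p,q)⟩, (l,s)⟩)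
    ?_ ?_ ?_ ?_ ?_
  · rintro ⟨⟨⟨⟨⟨s,m⟩,⟨k,t⟩⟩,⟨r,m'⟩⟩,⟨p,q⟩⟩,⟨j,k'⟩⟩ h
    simp only [Finset.mem_sigma, Finset.HasAntidiagonal.mem_antidiagonal, and_true] at h ⊢
    omega
  · rintro ⟨⟨⟨⟨⟨r,m⟩,⟨p,k⟩⟩,⟨s,m'⟩⟩,⟨q,t⟩⟩,⟨j,l⟩⟩ h
    simp only [Finset.mem_sigma, Finset.HasAntidiagonal.mem_antidiagonal, and_true] at h ⊢
    omega
  · rintro ⟨⟨⟨⟨⟨s,m⟩,⟨k,t⟩⟩,⟨r,m'⟩⟩,⟨p,q⟩⟩,⟨j,k'⟩⟩ h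
    simp only [Finset.mem_sigma, Finset.HasAntidiagonal.mem_antidiagonal] at h
    dsimp only
    simp only [Sigma.mk.inj_iff, Prod.mk.injEq, heq_eq_eq, and_true, true_and]
    omega
  · rintro ⟨⟨⟨⟨⟨r,m⟩,⟨p,k⟩⟩,⟨s,m'⟩⟩,⟨q,t⟩⟩,⟨j,l⟩⟩ h
    simp only [Finset.mem_sigma, Finset.HasAntidiagonal.mem_antidiagonal] at h
    dsimp only
    simp only [Sigma.mk.inj_iff, Prod.mk.injEq, heq_eq_eq, and_true, true_and]
    omega
  · rintro ⟨⟨⟨⟨⟨s,m⟩,⟨k,t⟩⟩,⟨r,m'⟩⟩,⟨p,q⟩⟩,⟨j,k'⟩⟩ h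
    rfl

lemma smul_factL {K : Type*} [CommRing K] [Algebra ℚ K] [Algebra K A]
    (j k r : ℕ) (x : A) :
    algebraMap ℚ K (1 / ((j + k).factorial : ℚ)) •
        (algebraMap ℚ K (1 / (r.factorial : ℚ)) • ((j + k).choose j • x))
      = algebraMap ℚ K
          (1 / (j.factorial : ℚ) * (1 / (k.factorial : ℚ) * (1 / (r.factorial : ℚ)))) • x := by
  rw [← Nat.cast_smul_eq_nsmul K ((j+k).choose j) x, smul_smul, smul_smul]
  rw [← map_natCast (algebraMap ℚ K) ((j+k).choose j), ← map_mul, ← map_mul]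
  congr 1
  congr 1
  rw [Nat.cast_choose ℚ (Nat.le_add_right j k), Nat.add_sub_cancel_left]
  have hj : (j.factorial : ℚ) ≠ 0 := Nat.cast_ne_zero.2 j.factorial_ne_zero
  have hk : (k.factorial : ℚ) ≠ 0 := Nat.cast_ne_zero.2 k.factorial_ne_zero
  have hr : (r.factorial : ℚ) ≠ 0 := Nat.cast_ne_zero.2 r.factorial_ne_zero
  have hjk : ((j+k).factorial : ℚ) ≠ 0 := Nat.cast_ne_zero.2 (j+k).factorial_ne_zero
  field_simp

lemma smul_factR {K : Type*} [CommRing K] [Algebra ℚ K] [Algebra K A]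
    (j k r : ℕ) (x : A) :
    algebraMap ℚ K (1 / ((j + k).factorial : ℚ)) •
        (algebraMap ℚ K (1 / (r.factorial : ℚ)) • ((j + k).choose j • x))
      = algebraMap ℚ K
          (1 / (k.factorial : ℚ) * (1 / (r.factorial : ℚ) * (1 / (j.factorial : ℚ)))) • x := by
  rw [smul_factL]
  congr 1
  ring


/-- the common flat summand appearing on both sides of the associativity law -/
def FFdef (K : Type*) [CommRing K] [Algebra ℚ K] (A : Type*) [Ring A] [Algebra K A]
    {N : ℕ} (D E : Fin N → A → A) (f g h : PowerSeries A)
    (a1 a2 a3 p q t : ℕ) : A :=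
  algebraMap ℚ K
      (1 / (a2.factorial : ℚ) * (1 / (a3.factorial : ℚ) * (1 / (a1.factorial : ℚ)))) •
    ∑ x1 : Fin a1 → Fin N, ∑ x2 : Fin a2 → Fin N, ∑ x3 : Fin a3 → Fin N,
      comps ((List.ofFn x1).map D)
          (comps ((List.ofFn x2).map D) (PowerSeries.coeff p f)) *
        comps ((List.ofFn x1).map E)
          (comps ((List.ofFn x3).map D) (PowerSeries.coeff q g)) *
        comps ((List.ofFn x2).map E)
          (comps ((List.ofFn x3).map E) (PowerSeries.coeff t h))

end CDaux

open CDaux in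
/-- Let `A` be an associative unital algebra over a commutative ring
`K ⊇ ℚ` and let `D₁,…,D_N, E¹,…,E^N : A → A` be pairwise commuting derivations.  Then
`a ⋆ b := μ ∘ e^{λ Σ_i D_i ⊗ E^i}(a ⊗ b)` is an associative unital product on
`A[[λ]]` deforming the product of `A`, i.e. `a ⋆ b = ab + O(λ)`. -/
theorem commuting_derivations_deformation
    (K : Type*) [CommRing K] [Algebra ℚ K]
    (A : Type*) [Ring A] [Algebra K A]
    (N : ℕ) (D E : Fin N → A → A)
    -- the `D i` and `E i` are `K`-linear derivations
    (hD_add : ∀ (i : Fin N) (a b : A), D i (a + b) = D i a + D i b)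
    (hD_smul : ∀ (i : Fin N) (c : K) (a : A), D i (c • a) = c • D i a)
    (hD_leibniz : ∀ (i : Fin N) (a b : A), D i (a * b) = D i a * b + a * D i b)
    (hE_add : ∀ (i : Fin N) (a b : A), E i (a + b) = E i a + E i b)
    (hE_smul : ∀ (i : Fin N) (c : K) (a : A), E i (c • a) = c • E i a)
    (hE_leibniz : ∀ (i : Fin N) (a b : A), E i (a * b) = E i a * b + a * E i b)
    -- all the `D`'s and `E`'s pairwise commute
    (hDD : ∀ (i j : Fin N) (a : A), D i (D j a) = D j (D i a))
    (hEE : ∀ (i j : Fin N) (a : A), E i (E j a) = E j (E i a))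
    (hDE : ∀ (i j : Fin N) (a : A), D i (E j a) = E j (D i a)) :
    -- `⋆` is associative,
    (∀ f g h : PowerSeries A,
      starCD K A N D E (starCD K A N D E f g) h
        = starCD K A N D E f (starCD K A N D E g h)) ∧
    -- unital,
    (∀ f : PowerSeries A, starCD K A N D E 1 f = f) ∧
    (∀ f : PowerSeries A, starCD K A N D E f 1 = f) ∧
    -- and deforms the product of `A`: `f ⋆ g = fg + O(λ)`.
    (∀ f g : PowerSeries A,
      PowerSeries.coeff 0 (starCD K A N D E f g)
        = PowerSeries.coeff 0 f * PowerSeries.coeff 0 g) := by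
  have hD1 : ∀ i, D i 1 = 0 := by
    intro i
    have h := hD_leibniz i 1 1
    simp only [mul_one, one_mul] at h
    exact (add_eq_left.mp h.symm)
  have hE1 : ∀ i, E i 1 = 0 := by
    intro i
    have h := hE_leibniz i 1 1
    simp only [mul_one, one_mul] at h
    exact (add_eq_left.mp h.symm)
  have hD0 : ∀ i, D i 0 = 0 := by
    intro i
    have h := hD_add i 0 0
    rw [add_zero] at h
    exact (add_eq_left.mp h.symm)
  have hE0 : ∀ i, E i 0 = 0 := by
    intro i
    have h := hE_add i 0 0
    rw [add_zero] at h
    exact (add_eq_left.mp h.symm)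
  have hDsuml : ∀ (l : List (Fin N)) {ι : Type} (s : Finset ι) (F : ι → A),
      comps (l.map D) (∑ x ∈ s, F x) = ∑ x ∈ s, comps (l.map D) (F x) :=
    fun l _ s F => comps_sum _ (mem_map_add D hD_add l) s F
  have hEsuml : ∀ (l : List (Fin N)) {ι : Type} (s : Finset ι) (F : ι → A),
      comps (l.map E) (∑ x ∈ s, F x) = ∑ x ∈ s, comps (l.map E) (F x) :=
    fun l _ s F => comps_sum _ (mem_map_add E hE_add l) s F
  have hDsmull : ∀ (l : List (Fin N)) (c : K) (a : A),
      comps (l.map D) (c • a) = c • comps (l.map D) a :=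
    fun l => comps_smul _ (mem_map_smul D hD_smul l)
  have hEsmull : ∀ (l : List (Fin N)) (c : K) (a : A),
      comps (l.map E) (c • a) = c • comps (l.map E) a :=
    fun l => comps_smul _ (mem_map_smul E hE_smul l)
  have hDzerol : ∀ (l : List (Fin N)), comps (l.map D) (0 : A) = 0 :=
    fun l => comps_zero _ (mem_map_add D hD_add l)
  have hEzerol : ∀ (l : List (Fin N)), comps (l.map E) (0 : A) = 0 :=
    fun l => comps_zero _ (mem_map_add E hE_add l)
  have hDDl : ∀ (l₁ l₂ : List (Fin N)) (a : A),
      comps (l₁.map D) (comps (l₂.map D) a) = comps (l₂.map D) (comps (l₁.map D) a) := by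
    intro l₁ l₂ a
    refine comps_comps_comm _ _ ?_ a
    intro φ hφ ψ hψ x
    obtain ⟨i, -, rfl⟩ := List.mem_map.1 hφ
    obtain ⟨j, -, rfl⟩ := List.mem_map.1 hψ
    exact hDD i j x
  have hDEl : ∀ (l₁ l₂ : List (Fin N)) (a : A),
      comps (l₁.map D) (comps (l₂.map E) a) = comps (l₂.map E) (comps (l₁.map D) a) := by
    intro l₁ l₂ a
    refine comps_comps_comm _ _ ?_ a
    intro φ hφ ψ hψ x
    obtain ⟨i, -, rfl⟩ := List.mem_map.1 hφ
    obtain ⟨j, -, rfl⟩ := List.mem_map.1 hψ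
    exact hDE i j x
  refine ⟨?_, ?_, ?_, ?_⟩
  · -- associativity
    intro f g h
    have hL : ∀ (s k t : ℕ),
        algebraMap ℚ K (1 / (s.factorial : ℚ)) •
          ∑ v : Fin s → Fin N,
            comps ((List.ofFn v).map D)
                (∑ rm ∈ Finset.HasAntidiagonal.antidiagonal k, ∑ pq ∈ Finset.HasAntidiagonal.antidiagonal rm.2,
                  algebraMap ℚ K (1 / (rm.1.factorial : ℚ)) •
                    ∑ w : Fin rm.1 → Fin N,
                      comps ((List.ofFn w).map D) (PowerSeries.coeff pq.1 f) *
                        comps ((List.ofFn w).map E) (PowerSeries.coeff pq.2 g)) *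
              comps ((List.ofFn v).map E) (PowerSeries.coeff t h)
        = ∑ rm ∈ Finset.HasAntidiagonal.antidiagonal k, ∑ pq ∈ Finset.HasAntidiagonal.antidiagonal rm.2,
            ∑ jk ∈ Finset.HasAntidiagonal.antidiagonal s,
              FFdef K A D E f g h rm.1 jk.1 jk.2 pq.1 pq.2 t := by
      intro s k t
      have e1 : ∀ v : Fin s → Fin N,
          comps ((List.ofFn v).map D)
              (∑ rm ∈ Finset.HasAntidiagonal.antidiagonal k, ∑ pq ∈ Finset.HasAntidiagonal.antidiagonal rm.2,
                algebraMap ℚ K (1 / (rm.1.factorial : ℚ)) •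
                  ∑ w : Fin rm.1 → Fin N,
                    comps ((List.ofFn w).map D) (PowerSeries.coeff pq.1 f) *
                      comps ((List.ofFn w).map E) (PowerSeries.coeff pq.2 g)) *
            comps ((List.ofFn v).map E) (PowerSeries.coeff t h)
          = ∑ rm ∈ Finset.HasAntidiagonal.antidiagonal k, ∑ pq ∈ Finset.HasAntidiagonal.antidiagonal rm.2,
              algebraMap ℚ K (1 / (rm.1.factorial : ℚ)) •
                ∑ w : Fin rm.1 → Fin N,
                  comps ((List.ofFn v).map D)
                      (comps ((List.ofFn w).map D) (PowerSeries.coeff pq.1 f) *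
                        comps ((List.ofFn w).map E) (PowerSeries.coeff pq.2 g)) *
                    comps ((List.ofFn v).map E) (PowerSeries.coeff t h) := by
        intro v
        rw [hDsuml, Finset.sum_mul]
        refine Finset.sum_congr rfl fun rm _ => ?_
        rw [hDsuml, Finset.sum_mul]
        refine Finset.sum_congr rfl fun pq _ => ?_
        rw [hDsmull, smul_mul_assoc, hDsuml, Finset.sum_mul]
      rw [Finset.sum_congr rfl fun v _ => e1 v, Finset.sum_comm]
      have e2 : ∀ rm : ℕ × ℕ,
          (∑ v : Fin s → Fin N, ∑ pq ∈ Finset.HasAntidiagonal.antidiagonal rm.2,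
            algebraMap ℚ K (1 / (rm.1.factorial : ℚ)) •
              ∑ w : Fin rm.1 → Fin N,
                comps ((List.ofFn v).map D)
                    (comps ((List.ofFn w).map D) (PowerSeries.coeff pq.1 f) *
                      comps ((List.ofFn w).map E) (PowerSeries.coeff pq.2 g)) *
                  comps ((List.ofFn v).map E) (PowerSeries.coeff t h))
          = ∑ pq ∈ Finset.HasAntidiagonal.antidiagonal rm.2,
              algebraMap ℚ K (1 / (rm.1.factorial : ℚ)) •
                ∑ w : Fin rm.1 → Fin N, ∑ v : Fin s → Fin N,
                  comps ((List.ofFn v).map D)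
                      (comps ((List.ofFn w).map D) (PowerSeries.coeff pq.1 f) *
                        comps ((List.ofFn w).map E) (PowerSeries.coeff pq.2 g)) *
                    comps ((List.ofFn v).map E) (PowerSeries.coeff t h) := by
        intro rm
        rw [Finset.sum_comm]
        refine Finset.sum_congr rfl fun pq _ => ?_
        rw [← Finset.smul_sum]
        congr 1
        rw [Finset.sum_comm]
      rw [Finset.sum_congr rfl fun rm _ => e2 rm]
      have e3 : ∀ (rm pq : ℕ × ℕ) (w : Fin rm.1 → Fin N),
          (∑ v : Fin s → Fin N,
            comps ((List.ofFn v).map D)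
                (comps ((List.ofFn w).map D) (PowerSeries.coeff pq.1 f) *
                  comps ((List.ofFn w).map E) (PowerSeries.coeff pq.2 g)) *
              comps ((List.ofFn v).map E) (PowerSeries.coeff t h))
          = ∑ jk ∈ Finset.HasAntidiagonal.antidiagonal s,
              s.choose jk.1 • GG D E jk.1 jk.2
                (comps ((List.ofFn w).map D) (PowerSeries.coeff pq.1 f))
                (comps ((List.ofFn w).map E) (PowerSeries.coeff pq.2 g))
                (PowerSeries.coeff t h) :=
        fun rm pq w => TD_mul D E hD_add hD_leibniz hEE s _ _ _
      rw [Finset.sum_congr rfl fun rm _ => Finset.sum_congr rfl fun pq _ => by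
        rw [Finset.sum_congr rfl fun w (_ : w ∈ Finset.univ) => e3 rm pq w,
          Finset.sum_comm]]
      rw [Finset.smul_sum]
      refine Finset.sum_congr rfl fun rm _ => ?_
      rw [Finset.smul_sum]
      refine Finset.sum_congr rfl fun pq _ => ?_
      rw [Finset.smul_sum, Finset.smul_sum]
      refine Finset.sum_congr rfl fun jk hjk => ?_
      have hs : jk.1 + jk.2 = s := Finset.HasAntidiagonal.mem_antidiagonal.1 hjk
      subst hs
      rw [← Finset.smul_sum, smul_factL]
      simp only [FFdef]
      congr 1
      unfold GG
      refine Finset.sum_congr rfl fun w _ => ?_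
      refine Finset.sum_congr rfl fun u _ => Finset.sum_congr rfl fun v _ => ?_
      rw [hDDl, hDEl]
    have hR : ∀ (r p k : ℕ),
        algebraMap ℚ K (1 / (r.factorial : ℚ)) •
          ∑ w : Fin r → Fin N,
            comps ((List.ofFn w).map D) (PowerSeries.coeff p f) *
              comps ((List.ofFn w).map E)
                (∑ sm ∈ Finset.HasAntidiagonal.antidiagonal k, ∑ qt ∈ Finset.HasAntidiagonal.antidiagonal sm.2,
                  algebraMap ℚ K (1 / (sm.1.factorial : ℚ)) •
                    ∑ v : Fin sm.1 → Fin N,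
                      comps ((List.ofFn v).map D) (PowerSeries.coeff qt.1 g) *
                        comps ((List.ofFn v).map E) (PowerSeries.coeff qt.2 h))
        = ∑ sm ∈ Finset.HasAntidiagonal.antidiagonal k, ∑ qt ∈ Finset.HasAntidiagonal.antidiagonal sm.2,
            ∑ jl ∈ Finset.HasAntidiagonal.antidiagonal r,
              FFdef K A D E f g h jl.1 jl.2 sm.1 p qt.1 qt.2 := by
      intro r p k
      have e1 : ∀ w : Fin r → Fin N,
          comps ((List.ofFn w).map D) (PowerSeries.coeff p f) *
            comps ((List.ofFn w).map E)
              (∑ sm ∈ Finset.HasAntidiagonal.antidiagonal k, ∑ qt ∈ Finset.HasAntidiagonal.antidiagonal sm.2,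
                algebraMap ℚ K (1 / (sm.1.factorial : ℚ)) •
                  ∑ v : Fin sm.1 → Fin N,
                    comps ((List.ofFn v).map D) (PowerSeries.coeff qt.1 g) *
                      comps ((List.ofFn v).map E) (PowerSeries.coeff qt.2 h))
          = ∑ sm ∈ Finset.HasAntidiagonal.antidiagonal k, ∑ qt ∈ Finset.HasAntidiagonal.antidiagonal sm.2,
              algebraMap ℚ K (1 / (sm.1.factorial : ℚ)) •
                ∑ v : Fin sm.1 → Fin N,
                  comps ((List.ofFn w).map D) (PowerSeries.coeff p f) *
                    comps ((List.ofFn w).map E)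
                      (comps ((List.ofFn v).map D) (PowerSeries.coeff qt.1 g) *
                        comps ((List.ofFn v).map E) (PowerSeries.coeff qt.2 h)) := by
        intro w
        rw [hEsuml, Finset.mul_sum]
        refine Finset.sum_congr rfl fun sm _ => ?_
        rw [hEsuml, Finset.mul_sum]
        refine Finset.sum_congr rfl fun qt _ => ?_
        rw [hEsmull, mul_smul_comm, hEsuml, Finset.mul_sum]
      rw [Finset.sum_congr rfl fun w _ => e1 w, Finset.sum_comm]
      have e2 : ∀ sm : ℕ × ℕ,
          (∑ w : Fin r → Fin N, ∑ qt ∈ Finset.HasAntidiagonal.antidiagonal sm.2,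
            algebraMap ℚ K (1 / (sm.1.factorial : ℚ)) •
              ∑ v : Fin sm.1 → Fin N,
                comps ((List.ofFn w).map D) (PowerSeries.coeff p f) *
                  comps ((List.ofFn w).map E)
                    (comps ((List.ofFn v).map D) (PowerSeries.coeff qt.1 g) *
                      comps ((List.ofFn v).map E) (PowerSeries.coeff qt.2 h)))
          = ∑ qt ∈ Finset.HasAntidiagonal.antidiagonal sm.2,
              algebraMap ℚ K (1 / (sm.1.factorial : ℚ)) •
                ∑ v : Fin sm.1 → Fin N, ∑ w : Fin r → Fin N,
                  comps ((List.ofFn w).map D) (PowerSeries.coeff p f) *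
                    comps ((List.ofFn w).map E)
                      (comps ((List.ofFn v).map D) (PowerSeries.coeff qt.1 g) *
                        comps ((List.ofFn v).map E) (PowerSeries.coeff qt.2 h)) := by
        intro sm
        rw [Finset.sum_comm]
        refine Finset.sum_congr rfl fun qt _ => ?_
        rw [← Finset.smul_sum]
        congr 1
        rw [Finset.sum_comm]
      rw [Finset.sum_congr rfl fun sm _ => e2 sm]
      have e3 : ∀ (qt sm : ℕ × ℕ) (v : Fin sm.1 → Fin N),
          (∑ w : Fin r → Fin N,
            comps ((List.ofFn w).map D) (PowerSeries.coeff p f) *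
              comps ((List.ofFn w).map E)
                (comps ((List.ofFn v).map D) (PowerSeries.coeff qt.1 g) *
                  comps ((List.ofFn v).map E) (PowerSeries.coeff qt.2 h)))
          = ∑ jl ∈ Finset.HasAntidiagonal.antidiagonal r,
              r.choose jl.1 • HH D E jl.1 jl.2
                (PowerSeries.coeff p f)
                (comps ((List.ofFn v).map D) (PowerSeries.coeff qt.1 g))
                (comps ((List.ofFn v).map E) (PowerSeries.coeff qt.2 h)) :=
        fun qt sm v => TE_mul D E hE_add hE_leibniz hDD r _ _ _
      rw [Finset.sum_congr rfl fun sm _ => Finset.sum_congr rfl fun qt _ => by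
        rw [Finset.sum_congr rfl fun v (_ : v ∈ Finset.univ) => e3 qt sm v,
          Finset.sum_comm]]
      rw [Finset.smul_sum]
      refine Finset.sum_congr rfl fun sm _ => ?_
      rw [Finset.smul_sum]
      refine Finset.sum_congr rfl fun qt _ => ?_
      rw [Finset.smul_sum, Finset.smul_sum]
      refine Finset.sum_congr rfl fun jl hjl => ?_
      have hr : jl.1 + jl.2 = r := Finset.HasAntidiagonal.mem_antidiagonal.1 hjl
      subst hr
      rw [← Finset.smul_sum, smul_factR]
      simp only [FFdef]
      congr 1
      unfold HH
      rw [Finset.sum_comm]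
      refine Finset.sum_congr rfl fun u _ => ?_
      rw [Finset.sum_comm]
    apply PowerSeries.ext
    intro n
    simp only [starCD, PowerSeries.coeff_mk]
    refine Eq.trans
      (Finset.sum_congr rfl fun sm _ => Finset.sum_congr rfl fun kt _ =>
        hL sm.1 kt.1 kt.2)
      (Eq.trans (reindex6 n (FFdef K A D E f g h))
        (Finset.sum_congr rfl fun rm _ => Finset.sum_congr rfl fun pk _ =>
          hR rm.1 pk.1 pk.2).symm)
  · -- left unit
    intro f
    apply PowerSeries.ext
    intro n
    simp only [starCD, PowerSeries.coeff_mk]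
    rw [Finset.sum_eq_single ((0 : ℕ), n)]
    · rw [Finset.sum_eq_single ((0 : ℕ), n)]
      · simp
      · intro pq hpq hne
        have h1 : pq.1 ≠ 0 := by
          have := Finset.HasAntidiagonal.mem_antidiagonal.1 hpq
          intro h0
          apply hne
          rcases pq with ⟨p, q⟩
          simp only at h0 this
          subst h0
          simp_all
        rw [PowerSeries.coeff_one, if_neg h1]
        simp [hDzerol]
      · intro hn
        exact absurd (Finset.HasAntidiagonal.mem_antidiagonal.2 (by simp)) hn
    · intro rm hrm hne
      have h1 : rm.1 ≠ 0 := by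
        have := Finset.HasAntidiagonal.mem_antidiagonal.1 hrm
        intro h0
        apply hne
        rcases rm with ⟨r, m⟩
        simp only at h0 this
        subst h0
        simp_all
      refine Finset.sum_eq_zero fun pq _ => ?_
      have hz : ∀ v : Fin rm.1 → Fin N,
          comps ((List.ofFn v).map D) (PowerSeries.coeff pq.1 1) = 0 := by
        intro v
        rw [PowerSeries.coeff_one]
        split_ifs with h0
        · exact comps_one_of_ne_nil D hD1 hD0 _
            (by simpa [List.ofFn_eq_nil_iff] using h1)
        · exact hDzerol _
      rw [Finset.sum_eq_zero (fun v _ => by rw [hz v, zero_mul]), smul_zero]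
    · intro hn
      exact absurd (Finset.HasAntidiagonal.mem_antidiagonal.2 (by simp)) hn
  · -- right unit
    intro f
    apply PowerSeries.ext
    intro n
    simp only [starCD, PowerSeries.coeff_mk]
    rw [Finset.sum_eq_single ((0 : ℕ), n)]
    · rw [Finset.sum_eq_single (n, (0 : ℕ))]
      · simp
      · intro pq hpq hne
        have h2 : pq.2 ≠ 0 := by
          have := Finset.HasAntidiagonal.mem_antidiagonal.1 hpq
          intro h0
          apply hne
          rcases pq with ⟨p, q⟩
          simp only at h0 this
          subst h0
          simp_all
        rw [PowerSeries.coeff_one, if_neg h2]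
        simp [hEzerol]
      · intro hn
        exact absurd (Finset.HasAntidiagonal.mem_antidiagonal.2 (by simp)) hn
    · intro rm hrm hne
      have h1 : rm.1 ≠ 0 := by
        have := Finset.HasAntidiagonal.mem_antidiagonal.1 hrm
        intro h0
        apply hne
        rcases rm with ⟨r, m⟩
        simp only at h0 this
        subst h0
        simp_all
      refine Finset.sum_eq_zero fun pq _ => ?_
      have hz : ∀ v : Fin rm.1 → Fin N,
          comps ((List.ofFn v).map E) (PowerSeries.coeff pq.2 1) = 0 := by
        intro v
        rw [PowerSeries.coeff_one]
        split_ifs with h0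
        · exact comps_one_of_ne_nil E hE1 hE0 _
            (by simpa [List.ofFn_eq_nil_iff] using h1)
        · exact hEzerol _
      rw [Finset.sum_eq_zero (fun v _ => by rw [hz v, mul_zero]), smul_zero]
    · intro hn
      exact absurd (Finset.HasAntidiagonal.mem_antidiagonal.2 (by simp)) hn
  · -- deformation
    intro f g
    simp only [starCD, PowerSeries.coeff_mk, Finset.Nat.antidiagonal_zero,
      Finset.sum_singleton]
    norm_num
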